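/- arXiv:0901.2360 — 4 statements merged into one kernel-verified Lean document; each statement's English description precedes it below -/
import Mathlib

section
/- There exists a finitely additive probability measure v on the power set of [0,1] such that v(Q ∩ [0,1]) = 1 (where Q is the rationals) and v([a,b]) = b - a for all 0 ≤ a ≤ b ≤ 1; moreover any such v is not countably additive. -/
open Filter Topology


/-- The rationals in [0,1] as a set of reals. -/
def ratsIn01 : Set ℝ := Set.range ((↑) : ℚ → ℝ) ∩ Set.Icc 0 1

/-- `v` is a finitely additive probability measure on the power set of `[0,1]`. -/
def IsFAProb (v : Set ℝ → ℝ) : Prop :=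
  (∀ A, A ⊆ Set.Icc (0:ℝ) 1 → v A ∈ Set.Icc (0:ℝ) 1) ∧
  v ∅ = 0 ∧ v (Set.Icc 0 1) = 1 ∧
  ∀ A B, A ⊆ Set.Icc (0:ℝ) 1 → B ⊆ Set.Icc (0:ℝ) 1 → Disjoint A B →
    v (A ∪ B) = v A + v B

/-- `v` is finitely additive, concentrated on the rationals, and agrees with
length on closed intervals. -/
def SpecialFA (v : Set ℝ → ℝ) : Prop :=
  IsFAProb v ∧ v ratsIn01 = 1 ∧
  ∀ a b : ℝ, 0 ≤ a → a ≤ b → b ≤ 1 → v (Set.Icc a b) = b - a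

/-- Countable additivity on the power set of `[0,1]`. -/
def CountablyAdditiveOn01 (v : Set ℝ → ℝ) : Prop :=
  ∀ A : ℕ → Set ℝ, (∀ n, A n ⊆ Set.Icc (0:ℝ) 1) →
    Pairwise (Function.onFun Disjoint A) →
    HasSum (fun n => v (A n)) (v (⋃ n, A n))


open scoped Classical in
noncomputable def cnt (n : ℕ) (A : Set ℝ) : ℕ :=
  ((Finset.Icc 1 n).filter (fun k : ℕ => ((k : ℝ) / (n : ℝ)) ∈ A)).card

noncomputable def mu (n : ℕ) (A : Set ℝ) : ℝ := (cnt n A : ℝ) / (n : ℝ)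

lemma mu_mem (n : ℕ) (A : Set ℝ) : mu n A ∈ Set.Icc (0:ℝ) 1 := by
  classical
  constructor
  · exact div_nonneg (Nat.cast_nonneg _) (Nat.cast_nonneg _)
  · rcases Nat.eq_zero_or_pos n with h | h
    · simp [mu, h]
    · apply div_le_one_of_le₀
      · have : cnt n A ≤ n := by
          calc cnt n A ≤ (Finset.Icc 1 n).card := Finset.card_filter_le _ _
          _ = n := by simp
        exact_mod_cast this
      · exact Nat.cast_nonneg _

lemma mu_empty (n : ℕ) : mu n (∅ : Set ℝ) = 0 := by
  simp [mu, cnt]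

lemma mu_union (n : ℕ) (A B : Set ℝ) (h : Disjoint A B) :
    mu n (A ∪ B) = mu n A + mu n B := by
  classical
  have : cnt n (A ∪ B) = cnt n A + cnt n B := by
    unfold cnt
    rw [← Finset.card_union_of_disjoint]
    · congr 1
      ext k
      simp [Finset.mem_filter, Set.mem_union]
      tauto
    · rw [Finset.disjoint_left]
      intro k hk hk'
      simp only [Finset.mem_filter] at hk hk'
      exact Set.disjoint_left.mp h hk.2 hk'.2
  rw [mu, this, Nat.cast_add, add_div]; rfl

noncomputable def UF : Ultrafilter ℕ := Ultrafilter.of Filter.atTop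

lemma UF_le : (UF : Filter ℕ) ≤ Filter.atTop := Ultrafilter.of_le _

lemma exists_lim (A : Set ℝ) :
    ∃ x ∈ Set.Icc (0:ℝ) 1, Tendsto (fun n => mu n A) (UF : Filter ℕ) (𝓝 x) := by
  have h : (UF.map (fun n => mu n A) : Filter ℝ) ≤ 𝓟 (Set.Icc 0 1) := by
    rw [Ultrafilter.coe_map, Filter.le_principal_iff, Filter.mem_map]
    exact Filter.univ_mem' (fun n => mu_mem n A)
  obtain ⟨x, hx, hle⟩ := isCompact_Icc.ultrafilter_le_nhds (UF.map (fun n => mu n A)) h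
  exact ⟨x, hx, hle⟩

noncomputable def v (A : Set ℝ) : ℝ := (exists_lim A).choose

lemma v_mem (A : Set ℝ) : v A ∈ Set.Icc (0:ℝ) 1 := (exists_lim A).choose_spec.1

lemma v_tendsto (A : Set ℝ) : Tendsto (fun n => mu n A) (UF : Filter ℕ) (𝓝 (v A)) :=
  (exists_lim A).choose_spec.2

lemma v_eq_of_tendsto {A : Set ℝ} {x : ℝ}
    (h : Tendsto (fun n => mu n A) (UF : Filter ℕ) (𝓝 x)) : v A = x :=
  tendsto_nhds_unique (v_tendsto A) h

lemma v_eq_of_tendsto_atTop {A : Set ℝ} {x : ℝ}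
    (h : Tendsto (fun n => mu n A) Filter.atTop (𝓝 x)) : v A = x :=
  v_eq_of_tendsto (h.mono_left UF_le)

lemma v_empty : v (∅ : Set ℝ) = 0 := by
  apply v_eq_of_tendsto_atTop
  simp only [mu_empty]
  exact tendsto_const_nhds

lemma v_union {A B : Set ℝ} (h : Disjoint A B) : v (A ∪ B) = v A + v B := by
  apply v_eq_of_tendsto
  have := (v_tendsto A).add (v_tendsto B)
  simpa only [← mu_union _ _ _ h] using this

lemma mu_Icc01 {n : ℕ} (hn : 1 ≤ n) : mu n (Set.Icc (0:ℝ) 1) = 1 := by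
  classical
  have hn' : (0:ℝ) < n := by exact_mod_cast hn
  have : cnt n (Set.Icc (0:ℝ) 1) = n := by
    unfold cnt
    rw [Finset.filter_congr_decidable, Finset.filter_true_of_mem, Nat.card_Icc]
    · omega
    · intro k hk
      simp only [Finset.mem_Icc] at hk
      constructor
      · positivity
      · rw [div_le_one hn']
        exact_mod_cast hk.2
  rw [mu, this, div_self (ne_of_gt hn')]

lemma v_Icc01 : v (Set.Icc (0:ℝ) 1) = 1 := by
  apply v_eq_of_tendsto_atTop
  have : ∀ᶠ n in Filter.atTop, mu n (Set.Icc (0:ℝ) 1) = 1 :=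
    Filter.eventually_atTop.2 ⟨1, fun n hn => mu_Icc01 hn⟩
  exact Filter.Tendsto.congr' (this.mono fun n h => h.symm) tendsto_const_nhds

lemma mu_rats {n : ℕ} (hn : 1 ≤ n) : mu n ratsIn01 = 1 := by
  classical
  have hn' : (0:ℝ) < n := by exact_mod_cast hn
  have : cnt n ratsIn01 = n := by
    unfold cnt
    rw [Finset.filter_congr_decidable, Finset.filter_true_of_mem, Nat.card_Icc]
    · omega
    · intro k hk
      simp only [Finset.mem_Icc] at hk
      simp only [ratsIn01, Set.mem_inter_iff, Set.mem_range, Set.mem_Icc]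
      refine ⟨⟨(k:ℚ)/(n:ℚ), by push_cast; ring⟩, ?_, ?_⟩
      · positivity
      · rw [div_le_one hn']; exact_mod_cast hk.2
  rw [mu, this, div_self (ne_of_gt hn')]

lemma v_rats : v ratsIn01 = 1 := by
  apply v_eq_of_tendsto_atTop
  have : ∀ᶠ n in Filter.atTop, mu n ratsIn01 = 1 :=
    Filter.eventually_atTop.2 ⟨1, fun n hn => mu_rats hn⟩
  exact Filter.Tendsto.congr' (this.mono fun n h => h.symm) tendsto_const_nhds

lemma cnt_Icc_lower {n : ℕ} (hn : 1 ≤ n) {a b : ℝ} (ha : 0 ≤ a) (hab : a ≤ b) (hb : b ≤ 1) :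
    (b - a) * n - 2 ≤ (cnt n (Set.Icc a b) : ℝ) := by
  classical
  have hn' : (0:ℝ) < n := by exact_mod_cast hn
  set m : ℕ := ⌈a * n⌉₊ + 1 with hm
  set M : ℕ := ⌊b * n⌋₊ with hM
  have hsub : Finset.Icc m M ⊆
      (Finset.Icc 1 n).filter (fun k : ℕ => ((k : ℝ) / (n : ℝ)) ∈ Set.Icc a b) := by
    intro k hk
    simp only [Finset.mem_Icc] at hk
    have hk1 : 1 ≤ k := le_trans (by omega) hk.1
    have hkn : k ≤ n := by
      have : M ≤ n := by
        have : ⌊b * n⌋₊ ≤ ⌊(n:ℝ)⌋₊ := Nat.floor_le_floor (by nlinarith)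
        simpa using this
      omega
    have hak : a * n ≤ k := by
      have h1 : a * n ≤ ⌈a * n⌉₊ := Nat.le_ceil _
      have h2 : (⌈a * n⌉₊ : ℝ) ≤ (k:ℝ) - 1 := by
        have : m ≤ k := hk.1
        have : (m : ℝ) ≤ k := by exact_mod_cast this
        rw [hm] at this; push_cast at this; linarith
      linarith
    have hkb : (k:ℝ) ≤ b * n := by
      have h1 : (k:ℝ) ≤ (M:ℝ) := by exact_mod_cast hk.2
      have h2 : (M:ℝ) ≤ b * n := Nat.floor_le (by nlinarith)
      linarith
    refine Finset.mem_filter.2 ⟨Finset.mem_Icc.2 ⟨hk1, hkn⟩, ?_, ?_⟩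
    · rw [le_div_iff₀ hn']; exact hak
    · rw [div_le_iff₀ hn']; exact hkb
  have hcard : (Finset.Icc m M).card ≤ cnt n (Set.Icc a b) := by
    unfold cnt
    rw [Finset.filter_congr_decidable]
    exact Finset.card_le_card hsub
  have hcardR : (M : ℝ) + 1 - m ≤ ((Finset.Icc m M).card : ℝ) := by
    rcases le_or_gt m (M + 1) with h | h
    · rw [Nat.card_Icc, Nat.cast_sub h]; push_cast; linarith
    · have : (M:ℝ) + 1 < m := by exact_mod_cast h
      have : (0:ℝ) ≤ ((Finset.Icc m M).card : ℝ) := Nat.cast_nonneg _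
      linarith
  have hMlb : b * n - 1 ≤ (M : ℝ) := by
    have := Nat.lt_floor_add_one (b * n)
    rw [hM]; push_cast; linarith
  have hmub : (m : ℝ) ≤ a * n + 2 := by
    have := Nat.ceil_lt_add_one (show (0:ℝ) ≤ a * n by positivity)
    rw [hm]; push_cast; linarith
  have : ((Finset.Icc m M).card : ℝ) ≤ (cnt n (Set.Icc a b) : ℝ) := by exact_mod_cast hcard
  nlinarith

lemma cnt_Icc_upper {n : ℕ} (hn : 1 ≤ n) {a b : ℝ} (ha : 0 ≤ a) (hab : a ≤ b) (hb : b ≤ 1) :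
    (cnt n (Set.Icc a b) : ℝ) ≤ (b - a) * n + 2 := by
  classical
  have hn' : (0:ℝ) < n := by exact_mod_cast hn
  have hsub : (Finset.Icc 1 n).filter (fun k : ℕ => ((k : ℝ) / (n : ℝ)) ∈ Set.Icc a b) ⊆
      Finset.Icc ⌈a * n⌉₊ ⌊b * n⌋₊ := by
    intro k hk
    rw [Finset.mem_filter] at hk
    obtain ⟨hk1, hka, hkb⟩ := hk
    rw [le_div_iff₀ hn'] at hka
    rw [div_le_iff₀ hn'] at hkb
    refine Finset.mem_Icc.2 ⟨Nat.ceil_le.2 hka, Nat.le_floor hkb⟩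
  have hcard : cnt n (Set.Icc a b) ≤ (Finset.Icc ⌈a * n⌉₊ ⌊b * n⌋₊).card := by
    unfold cnt
    rw [Finset.filter_congr_decidable]
    exact Finset.card_le_card hsub
  rcases le_or_gt (⌈a * n⌉₊) (⌊b * n⌋₊ + 1) with h | h
  · have h1 : ((Finset.Icc ⌈a * n⌉₊ ⌊b * n⌋₊).card : ℝ) = (⌊b * n⌋₊ : ℝ) + 1 - ⌈a * n⌉₊ := by
      rw [Nat.card_Icc, Nat.cast_sub h]; push_cast; ring
    have h2 : (⌊b * n⌋₊ : ℝ) ≤ b * n := Nat.floor_le (by nlinarith)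
    have h3 : a * n ≤ (⌈a * n⌉₊ : ℝ) := Nat.le_ceil _
    have h4 : (cnt n (Set.Icc a b) : ℝ) ≤ ((Finset.Icc ⌈a * n⌉₊ ⌊b * n⌋₊).card : ℝ) := by
      exact_mod_cast hcard
    nlinarith
  · have : (Finset.Icc ⌈a * n⌉₊ ⌊b * n⌋₊).card = 0 := by
      rw [Nat.card_Icc]; omega
    have h4 : cnt n (Set.Icc a b) = 0 := by omega
    rw [h4]; push_cast; nlinarith

lemma v_Icc {a b : ℝ} (ha : 0 ≤ a) (hab : a ≤ b) (hb : b ≤ 1) :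
    v (Set.Icc a b) = b - a := by
  apply v_eq_of_tendsto_atTop
  have hlim : Tendsto (fun n : ℕ => 2 / (n:ℝ)) Filter.atTop (𝓝 0) :=
    tendsto_const_nhds.div_atTop tendsto_natCast_atTop_atTop
  have h1 : Tendsto (fun n : ℕ => (b - a) - 2 / (n:ℝ)) Filter.atTop (𝓝 (b - a)) := by
    simpa using tendsto_const_nhds.sub hlim
  have h2 : Tendsto (fun n : ℕ => (b - a) + 2 / (n:ℝ)) Filter.atTop (𝓝 (b - a)) := by
    simpa using tendsto_const_nhds.add hlim
  apply tendsto_of_tendsto_of_tendsto_of_le_of_le' h1 h2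
  · filter_upwards [Filter.eventually_ge_atTop 1] with n hn
    have hn' : (0:ℝ) < n := by exact_mod_cast hn
    rw [mu, le_div_iff₀ hn']
    have := cnt_Icc_lower hn ha hab hb
    have e : (2:ℝ) / n * n = 2 := div_mul_cancel₀ _ (ne_of_gt hn')
    nlinarith [e]
  · filter_upwards [Filter.eventually_ge_atTop 1] with n hn
    have hn' : (0:ℝ) < n := by exact_mod_cast hn
    rw [mu, div_le_iff₀ hn']
    have := cnt_Icc_upper hn ha hab hb
    have e : (2:ℝ) / n * n = 2 := div_mul_cancel₀ _ (ne_of_gt hn')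
    nlinarith [e]

theorem stmt_0 :
    (∃ v : Set ℝ → ℝ, SpecialFA v) ∧
    ∀ v : Set ℝ → ℝ, SpecialFA v → ¬ CountablyAdditiveOn01 v := by
  constructor
  · refine ⟨v, ⟨fun A _ => v_mem A, v_empty, v_Icc01,
      fun A B _ _ h => v_union h⟩, v_rats, fun a b ha hab hb => v_Icc ha hab hb⟩
  · rintro w ⟨⟨hmem, hempty, _, _⟩, hrats, hIcc⟩ hca
    -- ratsIn01 is countable and nonempty
    have hct : ratsIn01.Countable :=
      (Set.countable_range _).mono Set.inter_subset_left
    have hne : ratsIn01.Nonempty :=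
      ⟨0, ⟨0, by norm_num⟩, by norm_num⟩
    obtain ⟨f, hf⟩ := Set.Countable.exists_eq_range hct hne
    set A : ℕ → Set ℝ := fun n => {x | x = f n ∧ ∀ m < n, f m ≠ x} with hA
    have hsub : ∀ n, A n ⊆ Set.Icc (0:ℝ) 1 := by
      intro n x hx
      have : x ∈ ratsIn01 := by rw [hf]; exact ⟨n, hx.1.symm⟩
      exact this.2
    have hdisj : Pairwise (Function.onFun Disjoint A) := by
      intro i j hij
      rcases hij.lt_or_gt with h | h
      · rw [Function.onFun, Set.disjoint_left]
        rintro x ⟨hx1, _⟩ ⟨_, hx2⟩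
        exact hx2 i h hx1.symm
      · rw [Function.onFun, Set.disjoint_left]
        rintro x ⟨_, hx1⟩ ⟨hx2, _⟩
        exact hx1 j h hx2.symm
    have hunion : (⋃ n, A n) = ratsIn01 := by
      apply Set.Subset.antisymm
      · rintro x ⟨S, ⟨n, rfl⟩, hx⟩
        rw [hf]; exact ⟨n, hx.1.symm⟩
      · intro x hx
        rw [hf] at hx
        obtain ⟨n, hn⟩ := hx
        have hex : ∃ n, f n = x := ⟨n, hn⟩
        refine Set.mem_iUnion.2 ⟨Nat.find hex, (Nat.find_spec hex).symm, ?_⟩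
        intro m hm heq
        exact Nat.find_min hex hm heq
    have hzero : ∀ n, w (A n) = 0 := by
      intro n
      have hsing : A n ⊆ {f n} := fun x hx => hx.1
      rcases Set.subset_singleton_iff_eq.1 hsing with h | h
      · rw [h]; exact hempty
      · have hfn : f n ∈ ratsIn01 := by rw [hf]; exact ⟨n, rfl⟩
        have h01 : f n ∈ Set.Icc (0:ℝ) 1 := hfn.2
        have := hIcc (f n) (f n) h01.1 le_rfl h01.2
        rw [Set.Icc_self] at this
        rw [h, this, sub_self]
    have := hca A hsub hdisj
    rw [hunion, hrats] at this
    have h0 : HasSum (fun n : ℕ => w (A n)) 0 := by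
      have : (fun n : ℕ => w (A n)) = fun _ => (0:ℝ) := funext hzero
      rw [this]; exact hasSum_zero
    exact one_ne_zero (this.unique h0)
end

section
/- Let player 1's measure on [0,1] have density 1.6 on (0,1/4)∪(1/2,3/4) and 0.4 elsewhere, and player 2's measure have density 1.6 on (1/4,1/2)∪(3/4,1) and 0.4 elsewhere. The allocation ([0,1/2], [1/2,1]) gives each player value 1/2, while allocating (0,1/4)∪(1/2,3/4) to player 1 and its complement to player 2 gives each player value 0.8. Hence the single-cut allocation at 1/2 is not weakly Pareto optimal. -/
open MeasureTheory ENNReal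

/-- Player 1's density: `1.6 = 8/5` on `(0,1/4) ∪ (1/2,3/4)`, `0.4 = 2/5` elsewhere. -/
noncomputable def f1 (x : ℝ) : ℝ≥0∞ :=
  if x ∈ Set.Ioo (0:ℝ) (1/4) ∪ Set.Ioo (1/2 : ℝ) (3/4) then 8/5 else 2/5

/-- Player 2's density: `1.6 = 8/5` on `(1/4,1/2) ∪ (3/4,1)`, `0.4 = 2/5` elsewhere. -/
noncomputable def f2 (x : ℝ) : ℝ≥0∞ :=
  if x ∈ Set.Ioo (1/4 : ℝ) (1/2) ∪ Set.Ioo (3/4 : ℝ) 1 then 8/5 else 2/5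

noncomputable def mu1 : Measure ℝ := (volume.restrict (Set.Icc (0:ℝ) 1)).withDensity f1
noncomputable def mu2 : Measure ℝ := (volume.restrict (Set.Icc (0:ℝ) 1)).withDensity f2

/-- Weak Pareto optimality of the allocation `(A, X \ A)`. -/
def WeaklyPO (ν₁ ν₂ : Measure ℝ) (X A : Set ℝ) : Prop :=
  ¬ ∃ B ⊆ X, ν₁ A < ν₁ B ∧ ν₂ (X \ A) < ν₂ (X \ B)

section Aux

open Set

lemma aux_ofr {a b : ℝ} (hb : 0 < b) :
    (ENNReal.ofReal a) / ENNReal.ofReal b = ENNReal.ofReal (a / b) := by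
  rw [ENNReal.ofReal_div_of_pos hb]

lemma aux_withDensity (U S : Set ℝ) (g : ℝ → ℝ≥0∞)
    (hg : ∀ x, g x = U.indicator (fun _ => (6/5 : ℝ≥0∞)) x + 2/5)
    (hU : MeasurableSet U) (hS : MeasurableSet S) :
    ((volume.restrict (Icc (0:ℝ) 1)).withDensity g) S
    = 6/5 * volume (U ∩ (S ∩ Icc (0:ℝ) 1)) + 2/5 * volume (S ∩ Icc (0:ℝ) 1) := by
  rw [withDensity_apply _ hS, Measure.restrict_restrict hS]
  have hfun : g = fun x => U.indicator (fun _ => (6/5 : ℝ≥0∞)) x + 2/5 := funext hg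
  rw [hfun, lintegral_add_right _ measurable_const, lintegral_indicator hU,
    Measure.restrict_restrict hU, setLIntegral_const, setLIntegral_const]

lemma hU1 : MeasurableSet (Ioo (0:ℝ) (1/4) ∪ Ioo (1/2 : ℝ) (3/4)) :=
  (measurableSet_Ioo).union measurableSet_Ioo

lemma hU2 : MeasurableSet (Ioo (1/4 : ℝ) (1/2) ∪ Ioo (3/4 : ℝ) 1) :=
  (measurableSet_Ioo).union measurableSet_Ioo

lemma mu1_eq (S : Set ℝ) (hS : MeasurableSet S) :
    mu1 S = 6/5 * volume ((Ioo (0:ℝ) (1/4) ∪ Ioo (1/2 : ℝ) (3/4)) ∩ (S ∩ Icc (0:ℝ) 1))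
      + 2/5 * volume (S ∩ Icc (0:ℝ) 1) := by
  refine aux_withDensity _ S f1 (fun x => ?_) hU1 hS
  unfold f1
  by_cases hx : x ∈ Ioo (0:ℝ) (1/4) ∪ Ioo (1/2 : ℝ) (3/4)
  · rw [Set.indicator_apply, if_pos hx, if_pos hx, ENNReal.div_add_div_same]; norm_num
  · rw [Set.indicator_apply, if_neg hx, if_neg hx, zero_add]

lemma mu2_eq (S : Set ℝ) (hS : MeasurableSet S) :
    mu2 S = 6/5 * volume ((Ioo (1/4 : ℝ) (1/2) ∪ Ioo (3/4 : ℝ) 1) ∩ (S ∩ Icc (0:ℝ) 1))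
      + 2/5 * volume (S ∩ Icc (0:ℝ) 1) := by
  refine aux_withDensity _ S f2 (fun x => ?_) hU2 hS
  unfold f2
  by_cases hx : x ∈ Ioo (1/4 : ℝ) (1/2) ∪ Ioo (3/4 : ℝ) 1
  · rw [Set.indicator_apply, if_pos hx, if_pos hx, ENNReal.div_add_div_same]; norm_num
  · rw [Set.indicator_apply, if_neg hx, if_neg hx, zero_add]

lemma final_num : (6/5 : ℝ≥0∞) * ENNReal.ofReal (1/4) + 2/5 * ENNReal.ofReal (1/2) = 1/2 := by
  rw [show (6:ℝ≥0∞)/5 = ENNReal.ofReal (6/5) by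
        rw [← aux_ofr (by norm_num)]; norm_num,
    show (2:ℝ≥0∞)/5 = ENNReal.ofReal (2/5) by
        rw [← aux_ofr (by norm_num)]; norm_num,
    show (1:ℝ≥0∞)/2 = ENNReal.ofReal (1/2) by
        rw [← aux_ofr (by norm_num)]; norm_num,
    ← ENNReal.ofReal_mul (by norm_num), ← ENNReal.ofReal_mul (by norm_num),
    ← ENNReal.ofReal_add (by norm_num) (by norm_num),
    ENNReal.ofReal_eq_ofReal_iff (by norm_num) (by norm_num)]
  norm_num

lemma final_num2 : (6/5 : ℝ≥0∞) * ENNReal.ofReal (1/2) + 2/5 * ENNReal.ofReal (1/2) = 4/5 := by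
  rw [show (6:ℝ≥0∞)/5 = ENNReal.ofReal (6/5) by
        rw [← aux_ofr (by norm_num)]; norm_num,
    show (2:ℝ≥0∞)/5 = ENNReal.ofReal (2/5) by
        rw [← aux_ofr (by norm_num)]; norm_num,
    show (4:ℝ≥0∞)/5 = ENNReal.ofReal (4/5) by
        rw [← aux_ofr (by norm_num)]; norm_num,
    ← ENNReal.ofReal_mul (by norm_num), ← ENNReal.ofReal_mul (by norm_num),
    ← ENNReal.ofReal_add (by norm_num) (by norm_num),
    ENNReal.ofReal_eq_ofReal_iff (by norm_num) (by norm_num)]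
  norm_num

end Aux

theorem stmt_6 :
    mu1 (Set.Icc (0:ℝ) (1/2)) = 1/2 ∧
    mu2 (Set.Icc (1/2 : ℝ) 1) = 1/2 ∧
    mu1 (Set.Ioo (0:ℝ) (1/4) ∪ Set.Ioo (1/2 : ℝ) (3/4)) = 4/5 ∧
    mu2 (Set.Icc (0:ℝ) 1 \ (Set.Ioo (0:ℝ) (1/4) ∪ Set.Ioo (1/2 : ℝ) (3/4))) = 4/5 ∧
    ¬ WeaklyPO mu1 mu2 (Set.Icc (0:ℝ) 1) (Set.Icc (0:ℝ) (1/2)) := by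
  have s1 : Set.Icc (0:ℝ) (1/2) ∩ Set.Icc (0:ℝ) 1 = Set.Icc (0:ℝ) (1/2) :=
    Set.inter_eq_left.2 (Set.Icc_subset_Icc_right (by norm_num))
  have s2 : (Set.Ioo (0:ℝ) (1/4) ∪ Set.Ioo (1/2 : ℝ) (3/4)) ∩ Set.Icc (0:ℝ) (1/2)
      = Set.Ioo (0:ℝ) (1/4) := by
    ext x
    simp only [Set.mem_inter_iff, Set.mem_union, Set.mem_Ioo, Set.mem_Icc]
    constructor
    · rintro ⟨h | h, h2⟩
      · exact h
      · exact absurd h.1 (by linarith [h2.2])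
    · intro h; exact ⟨Or.inl h, by constructor <;> linarith [h.1, h.2]⟩
  have s3 : Set.Icc (1/2 : ℝ) 1 ∩ Set.Icc (0:ℝ) 1 = Set.Icc (1/2 : ℝ) 1 :=
    Set.inter_eq_left.2 (Set.Icc_subset_Icc_left (by norm_num))
  have s4 : (Set.Ioo (1/4 : ℝ) (1/2) ∪ Set.Ioo (3/4 : ℝ) 1) ∩ Set.Icc (1/2 : ℝ) 1
      = Set.Ioo (3/4 : ℝ) 1 := by
    ext x
    simp only [Set.mem_inter_iff, Set.mem_union, Set.mem_Ioo, Set.mem_Icc]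
    constructor
    · rintro ⟨h | h, h2⟩
      · exact absurd h.2 (by linarith [h2.1])
      · exact h
    · intro h; exact ⟨Or.inr h, by constructor <;> linarith [h.1, h.2]⟩
  have hU1sub : (Set.Ioo (0:ℝ) (1/4) ∪ Set.Ioo (1/2 : ℝ) (3/4)) ⊆ Set.Icc (0:ℝ) 1 := by
    rintro x (⟨h1, h2⟩ | ⟨h1, h2⟩) <;> exact ⟨by linarith, by linarith⟩
  have hU2sub : (Set.Ioo (1/4 : ℝ) (1/2) ∪ Set.Ioo (3/4 : ℝ) 1) ⊆ Set.Icc (0:ℝ) 1 := by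
    rintro x (⟨h1, h2⟩ | ⟨h1, h2⟩) <;> exact ⟨by linarith, by linarith⟩
  have s5 : (Set.Ioo (0:ℝ) (1/4) ∪ Set.Ioo (1/2 : ℝ) (3/4)) ∩ Set.Icc (0:ℝ) 1
      = Set.Ioo (0:ℝ) (1/4) ∪ Set.Ioo (1/2 : ℝ) (3/4) := Set.inter_eq_left.2 hU1sub
  have s8 : (Set.Ioo (1/4 : ℝ) (1/2) ∪ Set.Ioo (3/4 : ℝ) 1)
      ∩ (Set.Icc (0:ℝ) 1 \ (Set.Ioo (0:ℝ) (1/4) ∪ Set.Ioo (1/2 : ℝ) (3/4)))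
      = Set.Ioo (1/4 : ℝ) (1/2) ∪ Set.Ioo (3/4 : ℝ) 1 := by
    apply Set.inter_eq_left.2
    intro x hx
    refine ⟨hU2sub hx, ?_⟩
    rcases hx with ⟨h1, h2⟩ | ⟨h1, h2⟩ <;>
      · rintro (⟨g1, g2⟩ | ⟨g1, g2⟩) <;> linarith
  have s9 : Set.Icc (0:ℝ) 1 \ Set.Icc (0:ℝ) (1/2) = Set.Ioc (1/2 : ℝ) 1 := by
    ext x
    simp only [Set.mem_diff, Set.mem_Icc, Set.mem_Ioc, not_and, not_le]
    constructor
    · rintro ⟨⟨h0, h1⟩, h2⟩; exact ⟨h2 h0, h1⟩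
    · rintro ⟨h1, h2⟩; exact ⟨⟨by linarith, h2⟩, fun _ => h1⟩
  have s10 : Set.Ioc (1/2 : ℝ) 1 ∩ Set.Icc (0:ℝ) 1 = Set.Ioc (1/2 : ℝ) 1 :=
    Set.inter_eq_left.2 (fun x ⟨h1, h2⟩ => ⟨by linarith, h2⟩)
  have s11 : (Set.Ioo (1/4 : ℝ) (1/2) ∪ Set.Ioo (3/4 : ℝ) 1) ∩ Set.Ioc (1/2 : ℝ) 1
      = Set.Ioo (3/4 : ℝ) 1 := by
    ext x
    simp only [Set.mem_inter_iff, Set.mem_union, Set.mem_Ioo, Set.mem_Ioc]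
    constructor
    · rintro ⟨h | h, h2⟩
      · exact absurd h.2 (by linarith [h2.1])
      · exact h
    · intro h; exact ⟨Or.inr h, by constructor <;> linarith [h.1, h.2]⟩
  -- volumes
  have vU1 : volume (Set.Ioo (0:ℝ) (1/4) ∪ Set.Ioo (1/2 : ℝ) (3/4)) = ENNReal.ofReal (1/2) := by
    rw [measure_union (by
        rw [Set.disjoint_left]
        rintro x ⟨h1, h2⟩ ⟨g1, g2⟩; linarith) measurableSet_Ioo,
      Real.volume_Ioo, Real.volume_Ioo, ← ENNReal.ofReal_add (by norm_num) (by norm_num)]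
    norm_num
  have vU2 : volume (Set.Ioo (1/4 : ℝ) (1/2) ∪ Set.Ioo (3/4 : ℝ) 1) = ENNReal.ofReal (1/2) := by
    rw [measure_union (by
        rw [Set.disjoint_left]
        rintro x ⟨h1, h2⟩ ⟨g1, g2⟩; linarith) measurableSet_Ioo,
      Real.volume_Ioo, Real.volume_Ioo, ← ENNReal.ofReal_add (by norm_num) (by norm_num)]
    norm_num
  have vdiff : volume (Set.Icc (0:ℝ) 1 \ (Set.Ioo (0:ℝ) (1/4) ∪ Set.Ioo (1/2 : ℝ) (3/4)))
      = ENNReal.ofReal (1/2) := by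
    rw [measure_diff hU1sub hU1.nullMeasurableSet (by rw [vU1]; exact ofReal_ne_top),
      vU1, Real.volume_Icc, ← ENNReal.ofReal_sub _ (by norm_num)]
    norm_num
  -- part 1
  have p1 : mu1 (Set.Icc (0:ℝ) (1/2)) = 1/2 := by
    rw [mu1_eq _ measurableSet_Icc, s1, s2, Real.volume_Ioo, Real.volume_Icc]
    rw [show (1/4 : ℝ) - 0 = 1/4 by norm_num, show (1/2 : ℝ) - 0 = 1/2 by norm_num]
    exact final_num
  have p2 : mu2 (Set.Icc (1/2 : ℝ) 1) = 1/2 := by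
    rw [mu2_eq _ measurableSet_Icc, s3, s4, Real.volume_Ioo, Real.volume_Icc]
    rw [show (1:ℝ) - 3/4 = 1/4 by norm_num, show (1:ℝ) - 1/2 = 1/2 by norm_num]
    exact final_num
  have p3 : mu1 (Set.Ioo (0:ℝ) (1/4) ∪ Set.Ioo (1/2 : ℝ) (3/4)) = 4/5 := by
    rw [mu1_eq _ hU1, s5, Set.inter_self, vU1]
    exact final_num2
  have p4 : mu2 (Set.Icc (0:ℝ) 1 \ (Set.Ioo (0:ℝ) (1/4) ∪ Set.Ioo (1/2 : ℝ) (3/4))) = 4/5 := by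
    have hm : MeasurableSet (Set.Icc (0:ℝ) 1 \ (Set.Ioo (0:ℝ) (1/4) ∪ Set.Ioo (1/2 : ℝ) (3/4))) :=
      measurableSet_Icc.diff hU1
    rw [mu2_eq _ hm, Set.inter_eq_left.2 (Set.diff_subset), s8, vU2, vdiff]
    exact final_num2
  have p5 : mu2 (Set.Icc (0:ℝ) 1 \ Set.Icc (0:ℝ) (1/2)) = 1/2 := by
    rw [s9, mu2_eq _ measurableSet_Ioc, s10, s11, Real.volume_Ioo, Real.volume_Ioc]
    rw [show (1:ℝ) - 3/4 = 1/4 by norm_num, show (1:ℝ) - 1/2 = 1/2 by norm_num]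
    exact final_num
  have hlt : (1/2 : ℝ≥0∞) < 4/5 := by
    rw [show (1:ℝ≥0∞)/2 = ENNReal.ofReal (1/2) by rw [← aux_ofr (by norm_num)]; norm_num,
      show (4:ℝ≥0∞)/5 = ENNReal.ofReal (4/5) by rw [← aux_ofr (by norm_num)]; norm_num,
      ENNReal.ofReal_lt_ofReal_iff (by norm_num)]
    norm_num
  refine ⟨p1, p2, p3, p4, ?_⟩
  intro h
  exact h ⟨Set.Ioo (0:ℝ) (1/4) ∪ Set.Ioo (1/2 : ℝ) (3/4), hU1sub,
    by rw [p1, p3]; exact hlt, by rw [p5, p4]; exact hlt⟩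
end

section
/- Let F: [0,1] → [0,1] be a strictly increasing cdf with median a, and define F* by F*(x) = 1/2 − 2(1/2 − F(x))² for x ≤ a and F*(x) = 1/2 + 2(1/2 − F(x))² for x ≥ a. Then for all a < c < b ≤ 1, (F*(c) − 1/2)/(F*(b) − 1/2) < (F(c) − 1/2)/(F(b) − 1/2). -/
theorem stmt_13 (F : ℝ → ℝ) (a : ℝ)
    (ha : a ∈ Set.Icc (0:ℝ) 1)
    (hmono : StrictMonoOn F (Set.Icc (0:ℝ) 1))
    (hFa : F a = 1/2)
    (Fstar : ℝ → ℝ)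
    (hFstar : ∀ x, Fstar x =
      if x ≤ a then 1/2 - 2 * (1/2 - F x)^2 else 1/2 + 2 * (1/2 - F x)^2) :
    ∀ c b : ℝ, a < c → c < b → b ≤ 1 →
      (Fstar c - 1/2) / (Fstar b - 1/2) < (F c - 1/2) / (F b - 1/2) := by
  intro c b hac hcb hb1
  obtain ⟨ha0, ha1⟩ := ha
  have hcI : c ∈ Set.Icc (0:ℝ) 1 := ⟨by linarith, by linarith⟩
  have hbI : b ∈ Set.Icc (0:ℝ) 1 := ⟨by linarith, hb1⟩
  have haI : a ∈ Set.Icc (0:ℝ) 1 := ⟨ha0, ha1⟩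
  have hFc : 1/2 < F c := hFa ▸ hmono haI hcI hac
  have hFcb : F c < F b := hmono hcI hbI hcb
  set u := F c - 1/2 with hu
  set v := F b - 1/2 with hv
  have hu0 : 0 < u := by simp [hu]; linarith
  have huv : u < v := by simp [hu, hv]; linarith
  have hv0 : 0 < v := lt_trans hu0 huv
  have hsc : Fstar c - 1/2 = 2 * u^2 := by
    rw [hFstar c, if_neg (by linarith), hu]; ring_nf
  have hsb : Fstar b - 1/2 = 2 * v^2 := by
    rw [hFstar b, if_neg (by linarith), hv]; ring_nf
  rw [hsc, hsb]
  have h : 2 * u^2 / (2 * v^2) = (u/v)^2 := by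
    field_simp
  rw [h]
  have huv1 : u / v < 1 := (div_lt_one hv0).mpr huv
  have huv0 : 0 < u / v := div_pos hu0 hv0
  calc (u/v)^2 < (u/v) * 1 := by nlinarith
    _ = u/v := mul_one _
end

section
/- Let f₁ = 1.6 on (0,1/4)∪(1/2,3/4) and 0.4 elsewhere, and f₂ = 1.6 on (1/4,1/2)∪(3/4,1) and 0.4 elsewhere, on [0,1]. Then the allocation A = (0,1/4)∪(1/2,3/4) to player 1 and Aᶜ to player 2 gives μ₁(A) = μ₂(Aᶜ) = 0.8. -/
open MeasureTheory ENNReal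

theorem stmt_19 :
    mu1 (Set.Ioo (0:ℝ) (1/4) ∪ Set.Ioo (1/2 : ℝ) (3/4)) = 4/5 ∧
    mu2 (Set.Icc (0:ℝ) 1 \ (Set.Ioo (0:ℝ) (1/4) ∪ Set.Ioo (1/2 : ℝ) (3/4))) = 4/5 := by
  set A : Set ℝ := Set.Ioo (0:ℝ) (1/4) ∪ Set.Ioo (1/2 : ℝ) (3/4) with hA
  set C : Set ℝ := Set.Ioo (1/4 : ℝ) (1/2) ∪ Set.Ioo (3/4 : ℝ) 1 with hC
  have hAm : MeasurableSet A := (measurableSet_Ioo.union measurableSet_Ioo)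
  have hCm : MeasurableSet C := (measurableSet_Ioo.union measurableSet_Ioo)
  have hAsub : A ⊆ Set.Icc (0:ℝ) 1 := by
    rintro x (⟨h1, h2⟩ | ⟨h1, h2⟩) <;> constructor <;> linarith
  have hmeasA : volume A = ENNReal.ofReal (1/2) := by
    rw [measure_union (by
      apply Set.disjoint_left.mpr
      rintro x ⟨_, h2⟩ ⟨h3, _⟩; linarith) measurableSet_Ioo]
    rw [Real.volume_Ioo, Real.volume_Ioo, ← ENNReal.ofReal_add (by norm_num) (by norm_num)]
    norm_num
  have hmeasC : volume C = ENNReal.ofReal (1/2) := by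
    rw [measure_union (by
      apply Set.disjoint_left.mpr
      rintro x ⟨_, h2⟩ ⟨h3, _⟩; linarith) measurableSet_Ioo]
    rw [Real.volume_Ioo, Real.volume_Ioo, ← ENNReal.ofReal_add (by norm_num) (by norm_num)]
    norm_num
  constructor
  · rw [mu1, withDensity_apply _ hAm, Measure.restrict_restrict hAm,
      Set.inter_eq_self_of_subset_left hAsub]
    rw [setLIntegral_congr_fun (g := fun _ => (8:ℝ≥0∞)/5) hAm
      (fun x hx => by simp only [f1]; exact if_pos hx)]
    rw [lintegral_const, Measure.restrict_apply MeasurableSet.univ, Set.univ_inter, hmeasA]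
    rw [show ((8:ℝ≥0∞)/5) = ENNReal.ofReal (8/5) by
        rw [ENNReal.ofReal_div_of_pos (by norm_num)]; norm_num,
      ← ENNReal.ofReal_mul (by norm_num),
      show ((4:ℝ≥0∞)/5) = ENNReal.ofReal (4/5) by
        rw [ENNReal.ofReal_div_of_pos (by norm_num)]; norm_num]
    norm_num
  · have hBC : (Set.Icc (0:ℝ) 1 \ A) =ᵐ[volume] C := by
      have hsub : (Set.Icc (0:ℝ) 1 \ A) \ C ⊆ ({0, 1/4, 1/2, 3/4, 1} : Set ℝ) := by
        rintro x ⟨⟨⟨hx0, hx1⟩, hxA⟩, hxC⟩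
        simp only [hA, Set.mem_union, Set.mem_Ioo, not_or, not_and_or, not_lt] at hxA
        simp only [hC, Set.mem_union, Set.mem_Ioo, not_or, not_and_or, not_lt] at hxC
        simp only [Set.mem_insert_iff, Set.mem_singleton_iff]
        rcases hxA with ⟨h1 | h1, h2 | h2⟩ <;> rcases hxC with ⟨h3 | h3, h4 | h4⟩ <;>
          first
          | (left; linarith)
          | (right; left; linarith)
          | (right; right; left; linarith)
          | (right; right; right; left; linarith)
          | (right; right; right; right; linarith)
      have hCsub : C ⊆ Set.Icc (0:ℝ) 1 \ A := by
        rintro x (⟨h1, h2⟩ | ⟨h1, h2⟩) <;>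
          refine ⟨⟨by linarith, by linarith⟩, ?_⟩ <;>
          · rintro (⟨h3, h4⟩ | ⟨h3, h4⟩) <;> linarith
      refine Filter.eventuallyEq_set.mpr ?_
      have h0 : volume (((Set.Icc (0:ℝ) 1 \ A) \ C) ∪ (C \ (Set.Icc (0:ℝ) 1 \ A))) = 0 := by
        rw [Set.diff_eq_empty.mpr hCsub, Set.union_empty]
        exact measure_mono_null hsub (Set.Finite.measure_zero (Set.toFinite _) _)
      have := (MeasureTheory.measure_symmDiff_eq_zero_iff (μ := volume)
        (s := Set.Icc (0:ℝ) 1 \ A) (t := C)).mp ?_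
      · exact Filter.eventuallyEq_set.mp this
      · rw [Set.symmDiff_def]; exact h0
    have hBm : MeasurableSet (Set.Icc (0:ℝ) 1 \ A) := measurableSet_Icc.diff hAm
    have hBsub : Set.Icc (0:ℝ) 1 \ A ⊆ Set.Icc (0:ℝ) 1 := Set.diff_subset
    rw [mu2, withDensity_apply _ hBm, Measure.restrict_restrict hBm,
      Set.inter_eq_self_of_subset_left hBsub]
    refine (setLIntegral_congr (f := f2) hBC).trans ?_
    rw [setLIntegral_congr_fun (g := fun _ => (8:ℝ≥0∞)/5) hCm
      (fun x hx => by simp only [f2]; exact if_pos hx)]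
    rw [lintegral_const, Measure.restrict_apply MeasurableSet.univ, Set.univ_inter, hmeasC]
    rw [show ((8:ℝ≥0∞)/5) = ENNReal.ofReal (8/5) by
        rw [ENNReal.ofReal_div_of_pos (by norm_num)]; norm_num,
      ← ENNReal.ofReal_mul (by norm_num),
      show ((4:ℝ≥0∞)/5) = ENNReal.ofReal (4/5) by
        rw [ENNReal.ofReal_div_of_pos (by norm_num)]; norm_num]
    norm_num
end
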